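/- For every x ∈ Z one has Fin(x) ∪ (−Fin(x)) = Span_ℚ(Fin(x)) ∩ Φ; consequently, Fin(x) ∪ (−Fin(x)) is a maximal closed root subsystem of Φ of rank dim_ℚ Span_ℚ(Fin(x)). (In other words, the stratification of Z by the pattern of finite coordinates is indexed by the maximal closed root subsystems of Φ.) -/

import Mathlib

open scoped Classical
noncomputable section

/-- A reduced crystallographic root system spanning `E`. -/
def IsRootSystem {E : Type*} [AddCommGroup E] [Module ℚ E] (Φ : Set E) : Prop :=
  Φ.Finite ∧ (0 : E) ∉ Φ ∧ Submodule.span ℚ Φ = ⊤ ∧ (∀ α ∈ Φ, -α ∈ Φ) ∧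
    (∀ α ∈ Φ, ∃ f : E →ₗ[ℚ] ℚ, f α = 2 ∧ (∀ β ∈ Φ, ∃ n : ℤ, f β = (n : ℚ)) ∧
      ∀ β ∈ Φ, β - f β • α ∈ Φ) ∧
    ∀ α ∈ Φ, ∀ c : ℚ, c • α ∈ Φ → c = 1 ∨ c = -1

/-- Canonical homogeneous coordinates on `ℙ¹ = ℂ ∪ {∞}`. -/
def coordP1 : OnePoint ℂ → ℂ × ℂ :=
  fun x => Option.elim x (0, 1) fun c => (1, c)

/-- Membership in `Z`. -/
def memZ {E : Type*} [AddCommGroup E] [Module ℚ E] (Φpos : Finset E)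
    (x : Φpos → OnePoint ℂ) : Prop :=
  ∀ c : Φpos → ℚ, ∑ l : Φpos, c l • (l : E) = 0 →
    ∑ l ∈ Finset.univ.filter fun l : Φpos => c l ≠ 0,
      (c l : ℂ) * (coordP1 (x l)).2 *
        ∏ m ∈ (Finset.univ.filter fun m : Φpos => c m ≠ 0).erase l, (coordP1 (x m)).1 = 0

/-- The embedding of the Cartan subalgebra `Hom_ℚ(E, ℂ)` into `(ℙ¹)^{Φ⁺}`. -/
def embH {E : Type*} [AddCommGroup E] [Module ℚ E] (Φpos : Finset E)
    (f : E →ₗ[ℚ] ℂ) : Φpos → OnePoint ℂ :=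
  fun l => ((f (l : E) : ℂ) : OnePoint ℂ)

/-- `Ψ` is a closed root subsystem of `Θ`. -/
def IsClosedSub {E : Type*} [AddCommGroup E] (Θ Ψ : Set E) : Prop :=
  Ψ ⊆ Θ ∧ (∀ l ∈ Ψ, -l ∈ Ψ) ∧ ∀ l ∈ Ψ, ∀ m ∈ Ψ, l + m ∈ Θ → l + m ∈ Ψ

/-- The rank of a subset: the dimension of its `ℚ`-linear span. -/
def rankOf {E : Type*} [AddCommGroup E] [Module ℚ E] (Ψ : Set E) : ℕ :=
  Module.finrank ℚ (Submodule.span ℚ Ψ)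

/-- `Ψ` is a maximal closed root subsystem of `Θ` of rank `m`. -/
def IsMaxClosedOfRank {E : Type*} [AddCommGroup E] [Module ℚ E] (Θ Ψ : Set E) (m : ℕ) : Prop :=
  IsClosedSub Θ Ψ ∧ rankOf Ψ = m ∧
    ∀ Ψ' : Set E, IsClosedSub Θ Ψ' → rankOf Ψ' = m → Ψ ⊆ Ψ' → Ψ' = Ψ


/-- `Fin(x)`: the set of positive roots where `x` has a finite coordinate. -/
def finSet {E : Type*} [AddCommGroup E] [Module ℚ E] (Φpos : Finset E)
    (x : Φpos → OnePoint ℂ) : Set E :=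
  {l : E | ∃ h : l ∈ Φpos, x ⟨l, h⟩ ≠ OnePoint.infty}


lemma coordP1_fst_of_ne {y : OnePoint ℂ} (h : y ≠ OnePoint.infty) : (coordP1 y).1 = 1 := by
  cases y with
  | infty => exact absurd rfl h
  | coe c => rfl

lemma key_mem_finSet {E : Type*} [AddCommGroup E] [Module ℚ E] (Φpos : Finset E)
    (x : Φpos → OnePoint ℂ) (hx : memZ Φpos x)
    (a : E) (ha : a ∈ Φpos) (hspan : a ∈ Submodule.span ℚ (finSet Φpos x)) :
    a ∈ finSet Φpos x := by
  by_contra hne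
  have hxinf : x ⟨a, ha⟩ = OnePoint.infty := by
    by_contra h; exact hne ⟨ha, h⟩
  obtain ⟨c₀, hsupp, hsum⟩ := Submodule.mem_span_set.mp hspan
  have hsubpos : finSet Φpos x ⊆ (Φpos : Set E) := fun l hl => hl.1
  have hc₀a : c₀ a = 0 := by
    by_contra h
    exact hne (hsupp (Finsupp.mem_support_iff.mpr h))
  set ahat := (⟨a, ha⟩ : Φpos) with hahat
  set c := fun l : Φpos => if l = ahat then (-1 : ℚ) else c₀ (l : E) with hc
  have hcval : ∀ l : Φpos, l ≠ ahat → c l = c₀ (l : E) := by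
    intro l hl; simp [hc, hl]
  have hsum0 : ∑ l : Φpos, c l • (l : E) = 0 := by
    have h1 : ∑ l : Φpos, c l • (l : E)
        = ∑ l : Φpos, (c₀ (l : E) • (l : E) + (if l = ahat then (-1 : ℚ) else 0) • (l : E)) := by
      apply Finset.sum_congr rfl
      intro l _
      by_cases hl : l = ahat
      · subst hl; simp [hc, hc₀a, hahat]
      · simp [hc, hl]
    rw [h1, Finset.sum_add_distrib]
    have h2 : ∑ l : Φpos, (if l = ahat then (-1 : ℚ) else 0) • (l : E) = -a := by
      rw [Finset.sum_congr rfl (fun l _ => by rw [ite_smul, zero_smul])]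
      rw [Finset.sum_ite_eq' Finset.univ ahat (fun l => (-1 : ℚ) • (l : E))]
      simp [hahat]
    have h3 : ∑ l : Φpos, c₀ (l : E) • (l : E) = a := by
      rw [← hsum]
      rw [Finset.sum_coe_sort Φpos (fun e => c₀ e • e)]
      rw [Finsupp.sum]
      apply (Finset.sum_subset (hsupp.trans hsubpos) _).symm
      intro e _ he
      rw [Finsupp.notMem_support_iff.mp he, zero_smul]
    rw [h2, h3]; simp
  have := hx c hsum0
  set T := Finset.univ.filter fun l : Φpos => c l ≠ 0 with hT
  have hahatT : ahat ∈ T := by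
    simp [hT, hc]
  have hfin : ∀ l : Φpos, l ∈ T → l ≠ ahat → (coordP1 (x l)).1 = 1 := by
    intro l hl hlne
    apply coordP1_fst_of_ne
    have : c l ≠ 0 := (Finset.mem_filter.mp hl).2
    rw [hcval l hlne] at this
    have hmem : (l : E) ∈ finSet Φpos x := hsupp (Finsupp.mem_support_iff.mpr this)
    obtain ⟨h', hne'⟩ := hmem
    simpa using hne'
  have heval : ∑ l ∈ T, (c l : ℂ) * (coordP1 (x l)).2 *
      ∏ m ∈ T.erase l, (coordP1 (x m)).1 = -1 := by
    rw [Finset.sum_eq_single ahat]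
    · have hprod : ∏ m ∈ T.erase ahat, (coordP1 (x m)).1 = 1 := by
        apply Finset.prod_eq_one
        intro m hm
        exact hfin m (Finset.mem_of_mem_erase hm) (Finset.ne_of_mem_erase hm)
      rw [hprod, hxinf]
      simp [hc, coordP1, OnePoint.infty]
    · intro l hl hlne
      have : ∏ m ∈ T.erase l, (coordP1 (x m)).1 = 0 := by
        apply Finset.prod_eq_zero (Finset.mem_erase.mpr ⟨(Ne.symm hlne), hahatT⟩)
        rw [hxinf]; rfl
      rw [this, mul_zero]
    · intro h; exact absurd hahatT h
  rw [this] at heval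
  exact absurd heval.symm (by norm_num)

theorem statement4 {E : Type*} [AddCommGroup E] [Module ℚ E] [FiniteDimensional ℚ E]
    (hr : 1 ≤ Module.finrank ℚ E)
    (Φ : Set E) (hΦ : IsRootSystem Φ)
    (ℓ : E →ₗ[ℚ] ℚ) (hℓ : ∀ α ∈ Φ, ℓ α ≠ 0)
    (Φpos : Finset E) (hpos : ∀ a : E, a ∈ Φpos ↔ a ∈ Φ ∧ 0 < ℓ a)
    (x : Φpos → OnePoint ℂ) (hx : memZ Φpos x) :
    finSet Φpos x ∪ {l : E | -l ∈ finSet Φpos x}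
        = (Submodule.span ℚ (finSet Φpos x) : Set E) ∩ Φ
    ∧ IsMaxClosedOfRank Φ (finSet Φpos x ∪ {l : E | -l ∈ finSet Φpos x})
        (Module.finrank ℚ (Submodule.span ℚ (finSet Φpos x))) := by
  set S := finSet Φpos x with hS
  have hneg : ∀ α ∈ Φ, -α ∈ Φ := hΦ.2.2.2.1
  have hSΦ : S ⊆ Φ := fun l hl => ((hpos l).mp hl.1).1
  have heq : S ∪ {l : E | -l ∈ S} = (Submodule.span ℚ S : Set E) ∩ Φ := by
    apply Set.Subset.antisymm
    · rintro l (hl | hl)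
      · exact ⟨Submodule.subset_span hl, hSΦ hl⟩
      · refine ⟨?_, ?_⟩
        · have : -l ∈ Submodule.span ℚ S := Submodule.subset_span hl
          simpa using Submodule.neg_mem _ this
        · have := hneg _ (hSΦ hl); simpa using this
    · rintro l ⟨hl1, hl2⟩
      rcases lt_or_gt_of_ne (hℓ l hl2) with h | h
      · right
        have hmem : -l ∈ Φpos := (hpos (-l)).mpr ⟨hneg l hl2, by simpa using h⟩
        exact key_mem_finSet Φpos x hx (-l) hmem (Submodule.neg_mem _ hl1)
      · left
        exact key_mem_finSet Φpos x hx l ((hpos l).mpr ⟨hl2, h⟩) hl1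
  refine ⟨heq, ?_, ?_, ?_⟩
  · refine ⟨?_, ?_, ?_⟩
    · rw [heq]; exact Set.inter_subset_right
    · rintro l (hl | hl)
      · right; simpa using hl
      · left; exact hl
    · intro l hl m hm hsum
      rw [heq] at hl hm ⊢
      exact ⟨Submodule.add_mem _ hl.1 hm.1, hsum⟩
  · have hspan : Submodule.span ℚ (S ∪ {l : E | -l ∈ S}) = Submodule.span ℚ S := by
      apply le_antisymm
      · rw [Submodule.span_le]
        intro l hl
        exact ((heq ▸ hl : l ∈ (Submodule.span ℚ S : Set E) ∩ Φ)).1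
      · exact Submodule.span_mono Set.subset_union_left
    rw [rankOf, hspan]
  · intro Ψ' hΨ' hrank hsub
    have hle : Submodule.span ℚ (S ∪ {l : E | -l ∈ S}) ≤ Submodule.span ℚ Ψ' :=
      Submodule.span_mono hsub
    have hspanS : Submodule.span ℚ (S ∪ {l : E | -l ∈ S}) = Submodule.span ℚ S := by
      apply le_antisymm
      · rw [Submodule.span_le]
        intro l hl
        exact ((heq ▸ hl : l ∈ (Submodule.span ℚ S : Set E) ∩ Φ)).1
      · exact Submodule.span_mono Set.subset_union_left
    rw [hspanS] at hle
    have hfr : Module.finrank ℚ (Submodule.span ℚ Ψ') ≤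
        Module.finrank ℚ (Submodule.span ℚ S) := by
      rw [← hrank]; exact le_of_eq rfl
    have hspaneq : Submodule.span ℚ S = Submodule.span ℚ Ψ' :=
      Submodule.eq_of_le_of_finrank_le hle hfr
    apply Set.Subset.antisymm _ hsub
    intro l hl
    rw [heq]
    refine ⟨?_, hΨ'.1 hl⟩
    have : l ∈ Submodule.span ℚ Ψ' := Submodule.subset_span hl
    rw [← hspaneq] at this
    exact this
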